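/- Let H be a real Hilbert space, let μ, ρ, α ∈ ℝ with 1 + 2ρα > 0, and let A be a (μ,ρ)-semimonotone set-valued operator on H. Then the operator B := A + α·id (whose graph is {(x, u + αx) : (x,u) ∈ graph A}) is ((μ + α(1 + ρα))/(1 + 2ρα), ρ/(1 + 2ρα))-semimonotone. -/

import Mathlib

/-- A set-valued operator `A` on a real Hilbert space is `(μ,ρ)`-semimonotone if
`⟪x - y, u - v⟫ ≥ μ‖x - y‖² + ρ‖u - v‖²` for all `(x,u)`, `(y,v)` in its graph. -/
def Semimonotone {H : Type*} [NormedAddCommGroup H] [InnerProductSpace ℝ H]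
    (μ ρ : ℝ) (A : H → Set H) : Prop :=
  ∀ ⦃x u y v : H⦄, u ∈ A x → v ∈ A y →
    (inner ℝ (x - y) (u - v) : ℝ) ≥ μ * ‖x - y‖ ^ 2 + ρ * ‖u - v‖ ^ 2

theorem stmt_2 {H : Type*} [NormedAddCommGroup H] [InnerProductSpace ℝ H] [CompleteSpace H]
    (μ ρ α : ℝ) (hα : 1 + 2 * ρ * α > 0) (A : H → Set H) (hA : Semimonotone μ ρ A) :
    Semimonotone ((μ + α * (1 + ρ * α)) / (1 + 2 * ρ * α)) (ρ / (1 + 2 * ρ * α))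
      (fun x => (fun u => u + α • x) '' A x) := by
  rintro x w y z ⟨u, hu, rfl⟩ ⟨v, hv, rfl⟩
  have h := hA hu hv
  have hw : u + α • x - (v + α • y) = (u - v) + α • (x - y) := by
    rw [smul_sub]; abel
  rw [hw, ge_iff_le]
  have h1 : (inner ℝ (x - y) ((u - v) + α • (x - y)) : ℝ)
      = (inner ℝ (x - y) (u - v) : ℝ) + α * ‖x - y‖ ^ 2 := by
    rw [inner_add_right, real_inner_smul_right, real_inner_self_eq_norm_sq]
  have h2 : ‖(u - v) + α • (x - y)‖ ^ 2
      = ‖u - v‖ ^ 2 + 2 * α * (inner ℝ (x - y) (u - v) : ℝ) + α ^ 2 * ‖x - y‖ ^ 2 := by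
    rw [norm_add_sq_real, real_inner_smul_right, norm_smul, real_inner_comm]
    simp [mul_pow, sq_abs]
    ring
  rw [h1, h2]
  have key : (μ + α * (1 + ρ * α)) / (1 + 2 * ρ * α) * ‖x - y‖ ^ 2 +
      ρ / (1 + 2 * ρ * α) * (‖u - v‖ ^ 2 + 2 * α * (inner ℝ (x - y) (u - v) : ℝ)
        + α ^ 2 * ‖x - y‖ ^ 2)
      = ((μ + α * (1 + ρ * α)) * ‖x - y‖ ^ 2 +
        ρ * (‖u - v‖ ^ 2 + 2 * α * (inner ℝ (x - y) (u - v) : ℝ)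
          + α ^ 2 * ‖x - y‖ ^ 2)) / (1 + 2 * ρ * α) := by ring
  rw [key, div_le_iff₀ hα]
  nlinarith [h]
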